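/- The partial derivative of G with respect to u at the point (z,u) = (π/2, 1) equals (√2/4)(2 − π); in particular ∂_u G(π/2, 1) ≠ 0. Together with ∂_z G(π/2, 1) = −√2/2 ≠ 0, this gives ∂_z G(π/2,1) · ∂_u G(π/2,1) ≠ 0. -/

import Mathlib

open Complex

/-- The entire function
`G(z,u) = cosh((z/2)√(1−2u)) − sinh((z/2)√(1−2u))/√(1−2u)`,
defined by its (everywhere convergent) power series
`G(z,u) = Σ_m (1−2u)^m [ (z/2)^{2m}/(2m)! − (z/2)^{2m+1}/(2m+1)! ]`,
which makes sense for all `z, u ∈ ℂ` and is independent of the branch of the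
square root `√(1−2u)`. -/
noncomputable def G (z u : ℂ) : ℂ :=
  ∑' m : ℕ, (1 - 2 * u) ^ m *
    ((z / 2) ^ (2 * m) / (Nat.factorial (2 * m) : ℂ)
      - (z / 2) ^ (2 * m + 1) / (Nat.factorial (2 * m + 1) : ℂ))

private lemma aux_hasSum1 (c : ℂ) :
    HasSum (fun m : ℕ => 2 * (m : ℂ) * (-1) ^ m * c ^ (2 * m) / (Nat.factorial (2 * m) : ℂ))
      (-c * Complex.sin c) := by
  set F : ℕ → ℂ := fun m => 2 * (m : ℂ) * (-1) ^ m * c ^ (2 * m) / (Nat.factorial (2 * m) : ℂ)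
    with hF
  have h := (Complex.hasSum_sin c).mul_left (-c)
  have key : ∀ m : ℕ, -c * ((-1) ^ m * c ^ (2 * m + 1) / (Nat.factorial (2 * m + 1) : ℂ))
      = F (m + 1) := by
    intro m
    have hfac : (Nat.factorial (2 * (m + 1)) : ℂ)
        = (2 * (m : ℂ) + 2) * (Nat.factorial (2 * m + 1) : ℂ) := by
      rw [show 2 * (m + 1) = (2 * m + 1) + 1 by ring, Nat.factorial_succ]
      push_cast; ring
    have hne : (Nat.factorial (2 * m + 1) : ℂ) ≠ 0 :=
      Nat.cast_ne_zero.mpr (Nat.factorial_ne_zero _)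
    have h2 : (2 * (m : ℂ) + 2) ≠ 0 := by
      have : (0:ℝ) < 2 * (m:ℝ) + 2 := by positivity
      intro hcon
      have := congrArg Complex.re hcon
      push_cast at this
      simp at this
      linarith
    rw [hF]
    simp only [hfac]
    push_cast
    field_simp
    ring
  have h' : HasSum (fun m => F (m + 1)) (-c * Complex.sin c) := by
    have heq : (fun m : ℕ => -c * ((-1) ^ m * c ^ (2 * m + 1) / (Nat.factorial (2 * m + 1) : ℂ)))
        = fun m => F (m + 1) := funext key
    exact heq ▸ h
  have := (hasSum_nat_add_iff (f := F) 1).mp h'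
  simpa [hF] using this

private lemma aux_hasSum2 (c : ℂ) :
    HasSum (fun m : ℕ => 2 * (m : ℂ) * (-1) ^ m * c ^ (2 * m + 1) / (Nat.factorial (2 * m + 1) : ℂ))
      (c * Complex.cos c - Complex.sin c) := by
  have h := ((Complex.hasSum_cos c).mul_left c).sub (Complex.hasSum_sin c)
  have heq : (fun m : ℕ => c * ((-1) ^ m * c ^ (2 * m) / (Nat.factorial (2 * m) : ℂ))
      - (-1) ^ m * c ^ (2 * m + 1) / (Nat.factorial (2 * m + 1) : ℂ))
      = fun m : ℕ => 2 * (m : ℂ) * (-1) ^ m * c ^ (2 * m + 1) / (Nat.factorial (2 * m + 1) : ℂ) := by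
    funext m
    have hfac : (Nat.factorial (2 * m + 1) : ℂ)
        = (2 * (m : ℂ) + 1) * (Nat.factorial (2 * m) : ℂ) := by
      rw [Nat.factorial_succ]; push_cast; ring
    have hne : (Nat.factorial (2 * m) : ℂ) ≠ 0 :=
      Nat.cast_ne_zero.mpr (Nat.factorial_ne_zero _)
    have h1 : (2 * (m : ℂ) + 1) ≠ 0 := by
      have hpos : (0:ℝ) < 2 * (m:ℝ) + 1 := by positivity
      intro hcon
      have := congrArg Complex.re hcon
      push_cast at this
      simp at this
      linarith
    rw [hfac]
    field_simp
    ring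
  exact heq ▸ h

private lemma sign_eq (m : ℕ) :
    ((m : ℂ) * (-1 : ℂ) ^ (m - 1) * (-2)) = 2 * (m : ℂ) * (-1) ^ m := by
  cases m with
  | zero => simp
  | succ k =>
    simp only [Nat.add_sub_cancel, pow_succ]
    push_cast
    ring

/-- `G z 1 = cos (z/2) - sin (z/2)`. -/
private lemma G_at_one (z : ℂ) :
    HasSum (fun m : ℕ => (1 - 2 * (1:ℂ)) ^ m *
        ((z / 2) ^ (2 * m) / (Nat.factorial (2 * m) : ℂ)
          - (z / 2) ^ (2 * m + 1) / (Nat.factorial (2 * m + 1) : ℂ)))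
      (Complex.cos (z / 2) - Complex.sin (z / 2)) := by
  have h := (Complex.hasSum_cos (z / 2)).sub (Complex.hasSum_sin (z / 2))
  have heq : (fun m : ℕ => (-1) ^ m * (z / 2) ^ (2 * m) / (Nat.factorial (2 * m) : ℂ)
      - (-1) ^ m * (z / 2) ^ (2 * m + 1) / (Nat.factorial (2 * m + 1) : ℂ))
      = fun m : ℕ => (1 - 2 * (1:ℂ)) ^ m *
        ((z / 2) ^ (2 * m) / (Nat.factorial (2 * m) : ℂ)
          - (z / 2) ^ (2 * m + 1) / (Nat.factorial (2 * m + 1) : ℂ)) := by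
    funext m
    have h1 : (1 - 2 * (1:ℂ)) = -1 := by ring
    rw [h1]
    ring
  exact heq ▸ h

/-- `∂_u G(π/2, 1) = (√2/4)(2 − π) ≠ 0`, and together with
`∂_z G(π/2, 1) = −√2/2 ≠ 0` the product of the two partial derivatives is nonzero. -/
theorem partial_derivatives_G_nonzero :
    HasDerivAt (fun u : ℂ => G ((Real.pi : ℂ) / 2) u)
      ((Real.sqrt 2 : ℂ) / 4 * (2 - (Real.pi : ℂ))) 1 ∧
    HasDerivAt (fun z : ℂ => G z 1) (-(Real.sqrt 2 : ℂ) / 2) ((Real.pi : ℂ) / 2) ∧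
    ((Real.sqrt 2 : ℂ) / 4 * (2 - (Real.pi : ℂ)) ≠ 0) ∧
    (-(Real.sqrt 2 : ℂ) / 2 * ((Real.sqrt 2 : ℂ) / 4 * (2 - (Real.pi : ℂ))) ≠ 0) := by
  set c : ℂ := (Real.pi : ℂ) / 2 / 2 with hc_def
  have hc : c = ((Real.pi / 4 : ℝ) : ℂ) := by rw [hc_def]; push_cast; ring
  have hsin : Complex.sin c = (Real.sqrt 2 : ℂ) / 2 := by
    rw [hc, ← Complex.ofReal_sin, Real.sin_pi_div_four]; push_cast; ring
  have hcos : Complex.cos c = (Real.sqrt 2 : ℂ) / 2 := by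
    rw [hc, ← Complex.ofReal_cos, Real.cos_pi_div_four]; push_cast; ring
  -- the coefficients
  set a : ℕ → ℂ := fun m => (((Real.pi : ℂ) / 2) / 2) ^ (2 * m) / (Nat.factorial (2 * m) : ℂ)
      - (((Real.pi : ℂ) / 2) / 2) ^ (2 * m + 1) / (Nat.factorial (2 * m + 1) : ℂ) with ha_def
  -- nonvanishing facts
  have hs2 : (Real.sqrt 2 : ℂ) ≠ 0 := by
    rw [Complex.ofReal_ne_zero]
    exact ne_of_gt (Real.sqrt_pos.mpr (by norm_num))
  have hpi2 : (2 : ℂ) - (Real.pi : ℂ) ≠ 0 := by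
    rw [sub_ne_zero, show (2:ℂ) = ((2:ℝ):ℂ) by norm_num]
    exact fun h => absurd (Complex.ofReal_inj.mp h) (by
      have := Real.pi_gt_three; intro hh; linarith)
  have hne1 : (Real.sqrt 2 : ℂ) / 4 * (2 - (Real.pi : ℂ)) ≠ 0 :=
    mul_ne_zero (div_ne_zero hs2 (by norm_num)) hpi2
  -- the z-derivative
  have hzfun : (fun z : ℂ => G z 1) = fun z => Complex.cos (z / 2) - Complex.sin (z / 2) := by
    funext z
    simp only [G]
    exact (G_at_one z).tsum_eq
  have hzderiv : HasDerivAt (fun z : ℂ => G z 1) (-(Real.sqrt 2 : ℂ) / 2) ((Real.pi : ℂ) / 2) := by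
    rw [hzfun]
    have hid : HasDerivAt (fun z : ℂ => z / 2) (1 / 2) ((Real.pi : ℂ) / 2) :=
      (hasDerivAt_id _).div_const 2
    have h := hid.ccos.sub hid.csin
    refine h.congr_deriv ?_
    rw [show (Real.pi : ℂ) / 2 / 2 = c from rfl, hsin, hcos]
    ring
  -- the u-derivative
  have huderiv : HasDerivAt (fun u : ℂ => G ((Real.pi : ℂ) / 2) u)
      ((Real.sqrt 2 : ℂ) / 4 * (2 - (Real.pi : ℂ))) 1 := by
    set f : ℕ → ℂ → ℂ := fun m u => (1 - 2 * u) ^ m * a m with hf_def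
    set f' : ℕ → ℂ → ℂ := fun m u => ((m : ℂ) * (1 - 2 * u) ^ (m - 1) * (-2)) * a m with hf'_def
    have hderiv : ∀ (m : ℕ) (y : ℂ), y ∈ Metric.ball (1:ℂ) 1 → HasDerivAt (f m) (f' m y) y := by
      intro m y _
      have h1 : HasDerivAt (fun u : ℂ => 1 - 2 * u) (-2) y := by
        simpa using (((hasDerivAt_id y).const_mul (2:ℂ)).const_sub 1)
      exact (h1.pow m).mul_const (a m)
    have hnorm_a : ∀ m : ℕ, ‖a m‖ ≤ 2 / (Nat.factorial (2 * m) : ℝ) := by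
      intro m
      have hcnorm : ‖(((Real.pi : ℂ) / 2) / 2)‖ ≤ 1 := by
        rw [show ((Real.pi : ℂ) / 2) / 2 = c from rfl, hc, Complex.norm_real,
          Real.norm_eq_abs, abs_of_pos (by positivity)]
        have := Real.pi_le_four
        linarith
      have hb1 : ‖(((Real.pi : ℂ) / 2) / 2) ^ (2 * m) / (Nat.factorial (2 * m) : ℂ)‖
          ≤ 1 / (Nat.factorial (2 * m) : ℝ) := by
        rw [norm_div, norm_pow, Complex.norm_natCast]
        gcongr
        · exact pow_le_one₀ (norm_nonneg _) hcnorm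
      have hb2 : ‖(((Real.pi : ℂ) / 2) / 2) ^ (2 * m + 1) / (Nat.factorial (2 * m + 1) : ℂ)‖
          ≤ 1 / (Nat.factorial (2 * m) : ℝ) := by
        rw [norm_div, norm_pow, Complex.norm_natCast]
        have hle : (Nat.factorial (2 * m) : ℝ) ≤ (Nat.factorial (2 * m + 1) : ℝ) := by
          exact_mod_cast Nat.factorial_le (by omega)
        have hstep : ‖((Real.pi : ℂ) / 2) / 2‖ ^ (2 * m + 1) / ((Nat.factorial (2 * m + 1) : ℕ) : ℝ)
            ≤ 1 / (Nat.factorial (2 * m + 1) : ℝ) := by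
          gcongr
          · exact pow_le_one₀ (norm_nonneg _) hcnorm
        refine hstep.trans ?_
        exact one_div_le_one_div_of_le (Nat.cast_pos.mpr (Nat.factorial_pos _)) hle
      calc ‖a m‖ ≤ ‖(((Real.pi : ℂ) / 2) / 2) ^ (2 * m) / (Nat.factorial (2 * m) : ℂ)‖
            + ‖(((Real.pi : ℂ) / 2) / 2) ^ (2 * m + 1) / (Nat.factorial (2 * m + 1) : ℂ)‖ :=
          norm_sub_le _ _
        _ ≤ 1 / (Nat.factorial (2 * m) : ℝ) + 1 / (Nat.factorial (2 * m) : ℝ) := by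
            exact add_le_add hb1 hb2
        _ = 2 / (Nat.factorial (2 * m) : ℝ) := by ring
    have hu : Summable (fun m : ℕ => 4 * (6:ℝ) ^ m / (Nat.factorial m : ℝ)) := by
      have := (Real.summable_pow_div_factorial 6).mul_left 4
      refine this.congr fun m => ?_
      rw [mul_div_assoc]
    have hbound : ∀ (m : ℕ) (y : ℂ), y ∈ Metric.ball (1:ℂ) 1 →
        ‖f' m y‖ ≤ 4 * (6:ℝ) ^ m / (Nat.factorial m : ℝ) := by
      intro m y hy
      have h3 : ‖(1:ℂ) - 2 * y‖ ≤ 3 := by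
        have hd : ‖y - 1‖ < 1 := by simpa [Metric.mem_ball, Complex.dist_eq] using hy
        calc ‖(1:ℂ) - 2 * y‖ = ‖(-2 : ℂ) * (y - 1) + (-1)‖ := by ring_nf
          _ ≤ ‖(-2 : ℂ) * (y - 1)‖ + ‖(-1 : ℂ)‖ := norm_add_le _ _
          _ = 2 * ‖y - 1‖ + 1 := by rw [norm_mul]; simp
          _ ≤ 3 := by linarith
      have key : ‖f' m y‖ ≤ (m : ℝ) * 3 ^ (m - 1) * 2 * (2 / (Nat.factorial (2 * m) : ℝ)) := by
        rw [hf'_def]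
        simp only [norm_mul, norm_pow, norm_neg, Complex.norm_natCast]
        have : ‖(2:ℂ)‖ = 2 := by simp
        rw [this]
        gcongr
        · exact hnorm_a m
      refine key.trans ?_
      have hm2 : (m : ℝ) ≤ 2 ^ m := by exact_mod_cast (Nat.lt_two_pow_self (n := m)).le
      have h3m : (3:ℝ) ^ (m - 1) ≤ 3 ^ m := by
        apply pow_le_pow_right₀ (by norm_num) (Nat.sub_le _ _)
      have hfacle : (Nat.factorial m : ℝ) ≤ (Nat.factorial (2 * m) : ℝ) := by
        exact_mod_cast Nat.factorial_le (by omega)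
      have hfpos : (0:ℝ) < (Nat.factorial m : ℝ) := Nat.cast_pos.mpr (Nat.factorial_pos _)
      have hfpos2 : (0:ℝ) < (Nat.factorial (2 * m) : ℝ) := Nat.cast_pos.mpr (Nat.factorial_pos _)
      calc (m : ℝ) * 3 ^ (m - 1) * 2 * (2 / (Nat.factorial (2 * m) : ℝ))
          = 4 * ((m : ℝ) * 3 ^ (m - 1)) / (Nat.factorial (2 * m) : ℝ) := by ring
        _ ≤ 4 * ((2:ℝ) ^ m * 3 ^ m) / (Nat.factorial m : ℝ) := by
            gcongr
        _ = 4 * (6:ℝ) ^ m / (Nat.factorial m : ℝ) := by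
            rw [← mul_pow]; norm_num
    have hsum0 : Summable fun m : ℕ => f m 1 := (G_at_one ((Real.pi : ℂ) / 2)).summable
    have H := hasDerivAt_tsum_of_isPreconnected hu Metric.isOpen_ball
      (convex_ball (1:ℂ) 1).isPreconnected hderiv hbound
      (Metric.mem_ball_self one_pos) hsum0 (Metric.mem_ball_self one_pos)
    have hfun : (fun y : ℂ => ∑' m, f m y) = fun u : ℂ => G ((Real.pi : ℂ) / 2) u := by
      funext y
      simp only [G, hf_def, ha_def]
    have hval : HasSum (fun m => f' m 1) ((Real.sqrt 2 : ℂ) / 4 * (2 - (Real.pi : ℂ))) := by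
      have h12 := (aux_hasSum1 c).sub (aux_hasSum2 c)
      have heq : (fun m : ℕ => 2 * (m : ℂ) * (-1) ^ m * c ^ (2 * m) / (Nat.factorial (2 * m) : ℂ)
          - 2 * (m : ℂ) * (-1) ^ m * c ^ (2 * m + 1) / (Nat.factorial (2 * m + 1) : ℂ))
          = fun m => f' m 1 := by
        funext m
        rw [hf'_def]
        simp only
        rw [show (1 : ℂ) - 2 * 1 = -1 by ring, sign_eq m, ha_def]
        simp only
        rw [show ((Real.pi : ℂ) / 2) / 2 = c from rfl]
        ring
      have hvv : -c * Complex.sin c - (c * Complex.cos c - Complex.sin c)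
          = (Real.sqrt 2 : ℂ) / 4 * (2 - (Real.pi : ℂ)) := by
        rw [hsin, hcos, hc_def]
        ring
      exact heq ▸ hvv ▸ h12
    rw [← hfun, ← hval.tsum_eq]
    exact H
  refine ⟨huderiv, hzderiv, hne1, mul_ne_zero ?_ hne1⟩
  rw [div_ne_zero_iff]
  exact ⟨neg_ne_zero.mpr hs2, by norm_num⟩
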